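/- Let q = 2^m with m ≥ 5 odd. Any two distinct 6-subsets B_1, B_2 of U_{q+1} with σ_{6,3}(B_1) = σ_{6,3}(B_2) = 0 satisfy |B_1 ∩ B_2| ≤ 4. -/

import Mathlib

open Finset

attribute [local instance] Classical.propDecidable

/-- The `l`-th elementary symmetric polynomial evaluated on a finite set `B`. -/
noncomputable def esym {F : Type*} [CommRing F] (B : Finset F) (l : ℕ) : F :=
  ∑ s ∈ B.powersetCard l, ∏ x ∈ s, x

/-- The set of `n`-th roots of unity. -/
def rootsSet (F : Type*) [Monoid F] (n : ℕ) : Set F := {u | u ^ n = 1}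

lemma esym_zero {F : Type*} [CommRing F] (B : Finset F) : esym B 0 = 1 := by
  simp [esym]

lemma esym_empty {F : Type*} [CommRing F] (l : ℕ) : esym (∅ : Finset F) (l + 1) = 0 := by
  rw [esym, Finset.powersetCard_eq_empty.mpr (by simp), Finset.sum_empty]

lemma esym_insert {F : Type*} [CommRing F] {a : F} {s : Finset F} (ha : a ∉ s) (l : ℕ) :
    esym (insert a s) (l + 1) = esym s (l + 1) + a * esym s l := by
  classical
  unfold esym
  rw [Finset.powersetCard_succ_insert ha]
  rw [Finset.sum_union, Finset.sum_image]
  · congr 1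
    rw [Finset.mul_sum]
    refine Finset.sum_congr rfl fun t ht => ?_
    rw [Finset.prod_insert fun hat => ha ((Finset.mem_powersetCard.mp ht).1 hat)]
  · intro u hu u' hu' h
    have hau : a ∉ u := fun h' => ha ((Finset.mem_powersetCard.mp hu).1 h')
    have hau' : a ∉ u' := fun h' => ha ((Finset.mem_powersetCard.mp hu').1 h')
    rw [← Finset.erase_insert hau, ← Finset.erase_insert hau', h]
  · rw [Finset.disjoint_left]
    intro t ht ht'
    rw [Finset.mem_image] at ht'
    obtain ⟨u, hu, rfl⟩ := ht'
    exact ha ((Finset.mem_powersetCard.mp ht).1 (Finset.mem_insert_self a u))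

lemma gcd3 (m : ℕ) (hodd : Odd m) : Nat.Coprime 3 (2 ^ m - 1) := by
  obtain ⟨k, rfl⟩ := hodd
  have h4 : 4 ^ k % 3 = 1 := by
    induction k with
    | zero => rfl
    | succ n ih => rw [pow_succ, Nat.mul_mod, ih]
  have h2m : 2 ^ (2 * k + 1) % 3 = 2 := by
    rw [pow_succ, pow_mul, show (2 : ℕ) ^ 2 = 4 from rfl, Nat.mul_mod, h4]
  have hge : 1 ≤ 2 ^ (2 * k + 1) := Nat.one_le_two_pow
  have hx : (2 ^ (2 * k + 1) - 1) % 3 = 1 := by omega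
  show Nat.gcd 3 (2 ^ (2 * k + 1) - 1) = 1
  rw [Nat.gcd_rec, hx, Nat.gcd_one_left]

lemma core {F : Type*} [Field F] [CharP F 2] (m : ℕ) (hodd : Odd m)
    (x0 x1 x2 x3 a A e : F)
    (h01 : x0 ≠ x1) (h02 : x0 ≠ x2) (h03 : x0 ≠ x3)
    (h12 : x1 ≠ x2) (h13 : x1 ≠ x3) (h23 : x2 ≠ x3)
    (hu0 : x0 ^ (2 ^ m + 1) = 1) (hu1 : x1 ^ (2 ^ m + 1) = 1)
    (hu2 : x2 ^ (2 ^ m + 1) = 1) (hu3 : x3 ^ (2 ^ m + 1) = 1)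
    (H0 : x0 ^ 5 - a * x0 ^ 4 + A * x0 - e = 0)
    (H1 : x1 ^ 5 - a * x1 ^ 4 + A * x1 - e = 0)
    (H2 : x2 ^ 5 - a * x2 ^ 4 + A * x2 - e = 0)
    (H3 : x3 ^ 5 - a * x3 ^ 4 + A * x3 - e = 0) : False := by
  have h2 : (2 : F) = 0 := CharTwo.two_eq_zero
  have hqpos : 1 ≤ 2 ^ m := Nat.one_le_two_pow
  have hx0 : x0 ≠ 0 := by rintro rfl; rw [zero_pow (by omega)] at hu0; exact zero_ne_one hu0
  have hx1 : x1 ≠ 0 := by rintro rfl; rw [zero_pow (by omega)] at hu1; exact zero_ne_one hu1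
  have hx2 : x2 ≠ 0 := by rintro rfl; rw [zero_pow (by omega)] at hu2; exact zero_ne_one hu2
  have hx3 : x3 ≠ 0 := by rintro rfl; rw [zero_pow (by omega)] at hu3; exact zero_ne_one hu3
  have inv0 : x0⁻¹ = x0 ^ 2 ^ m := inv_eq_of_mul_eq_one_right (by rw [← pow_succ']; exact hu0)
  have inv1 : x1⁻¹ = x1 ^ 2 ^ m := inv_eq_of_mul_eq_one_right (by rw [← pow_succ']; exact hu1)
  have inv2 : x2⁻¹ = x2 ^ 2 ^ m := inv_eq_of_mul_eq_one_right (by rw [← pow_succ']; exact hu2)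
  have inv3 : x3⁻¹ = x3 ^ 2 ^ m := inv_eq_of_mul_eq_one_right (by rw [← pow_succ']; exact hu3)
  have hs1 : x1 - x0 ≠ 0 := sub_ne_zero.mpr h01.symm
  have hs2 : x2 - x0 ≠ 0 := sub_ne_zero.mpr h02.symm
  have hs3 : x3 - x0 ≠ 0 := sub_ne_zero.mpr h03.symm
  -- the affine equation Q i : D * z i ^ 4 + c * z i = 1
  have P : ∀ x : F, x ^ 5 - a * x ^ 4 + A * x - e = 0 → x - x0 ≠ 0 →
      (x0 ^ 4 + A) * ((x - x0)⁻¹) ^ 4 + (a + x0) * (x - x0)⁻¹ = 1 := by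
    intro x H hs
    have P1 : (x - x0) ^ 5 + (a + x0) * (x - x0) ^ 4 + (x0 ^ 4 + A) * (x - x0) = 0 := by
      linear_combination H - H0 + (x^4*a + (-2)*x0*x^3*a + (-2)*x0*x^4 + (3)*x0^2*x^2*a + (3)*x0^2*x^3 + (-2)*x0^3*x*a + (-2)*x0^3*x^2 + x0^4*x) * h2
    have P1' : (x - x0) ^ 4 + (a + x0) * (x - x0) ^ 3 + (x0 ^ 4 + A) = 0 :=
      mul_left_cancel₀ hs (by linear_combination P1)
    have hinv : (x - x0)⁻¹ * (x - x0) = 1 := inv_mul_cancel₀ hs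
    refine mul_right_cancel₀ (pow_ne_zero 4 hs) ?_
    linear_combination ((x0 ^ 4 + A) * (((x - x0)⁻¹) ^ 3 * (x - x0) ^ 3 + ((x - x0)⁻¹) ^ 2 * (x - x0) ^ 2 + (x - x0)⁻¹ * (x - x0) + 1) + (a + x0) * (x - x0) ^ 3) * hinv + P1' + (-(x - x0) ^ 4) * h2
  have Q1 := P x1 H1 hs1
  have Q2 := P x2 H2 hs2
  have Q3 := P x3 H3 hs3
  -- the semilinear equation R i : z i ^ q = -x0^2 * z i - x0
  have R : ∀ x : F, x ≠ 0 → x⁻¹ = x ^ 2 ^ m → x - x0 ≠ 0 → x0 ≠ x →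
      ((x - x0)⁻¹) ^ 2 ^ m = -x0 ^ 2 * (x - x0)⁻¹ - x0 := by
    intro x hx invx hs h0x
    have hsq : (x - x0) ^ 2 ^ m = x⁻¹ - x0⁻¹ := by
      rw [sub_pow_char_pow, ← invx, ← inv0]
    have hs' : -x + x0 ≠ 0 := fun h => hs (by linear_combination -h)
    have key : (x⁻¹ - x0⁻¹)⁻¹ = -x0 ^ 2 * (x - x0)⁻¹ - x0 := by
      field_simp
      ring
    rw [inv_pow, hsq, key]
  have R1 := R x1 hx1 inv1 hs1 h01
  have R2 := R x2 hx2 inv2 hs2 h02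
  have R3 := R x3 hx3 inv3 hs3 h03
  set z1 : F := (x1 - x0)⁻¹ with hz1
  set z2 : F := (x2 - x0)⁻¹ with hz2
  set z3 : F := (x3 - x0)⁻¹ with hz3
  have hw : z1 - z2 ≠ 0 := by
    rw [sub_ne_zero, hz1, hz2]
    exact fun h => h12 (sub_left_inj.mp (inv_injective h))
  have hv : z1 - z3 ≠ 0 := by
    rw [sub_ne_zero, hz1, hz3]
    exact fun h => h13 (sub_left_inj.mp (inv_injective h))
  have hpow4 : ∀ u v : F, (u - v) ^ 4 = u ^ 4 - v ^ 4 := by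
    intro u v
    have := sub_pow_char_pow (p := 2) u v 2
    norm_num at this
    exact this
  have Dw : (x0 ^ 4 + A) * (z1 - z2) ^ 4 + (a + x0) * (z1 - z2) = 0 := by
    rw [hpow4]
    linear_combination Q1 - Q2
  have Dv : (x0 ^ 4 + A) * (z1 - z3) ^ 4 + (a + x0) * (z1 - z3) = 0 := by
    rw [hpow4]
    linear_combination Q1 - Q3
  have Rw : (z1 - z2) ^ 2 ^ m = -x0 ^ 2 * (z1 - z2) := by
    rw [sub_pow_char_pow, R1, R2]; ring
  have Rv : (z1 - z3) ^ 2 ^ m = -x0 ^ 2 * (z1 - z3) := by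
    rw [sub_pow_char_pow, R1, R3]; ring
  by_cases hD : x0 ^ 4 + A = 0
  · have hc : a + x0 = 0 := by
      have h' : (a + x0) * (z1 - z2) = 0 := by linear_combination Dw - (z1 - z2)^4 * hD
      rcases mul_eq_zero.mp h' with h | h
      · exact h
      · exact absurd h hw
    rw [hD, hc] at Q1
    simp at Q1
  · have hw3 : (x0 ^ 4 + A) * (z1 - z2) ^ 3 + (a + x0) = 0 :=
      mul_right_cancel₀ hw (by linear_combination Dw)
    have hv3 : (x0 ^ 4 + A) * (z1 - z3) ^ 3 + (a + x0) = 0 :=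
      mul_right_cancel₀ hv (by linear_combination Dv)
    have hwv : (z1 - z2) ^ 3 = (z1 - z3) ^ 3 :=
      mul_left_cancel₀ hD (by linear_combination hw3 - hv3)
    set r : F := (z1 - z2) * (z1 - z3)⁻¹ with hr
    have hr0 : r ≠ 0 := mul_ne_zero hw (inv_ne_zero hv)
    have hr3 : r ^ 3 = 1 := by
      rw [hr, mul_pow, inv_pow, hwv]
      exact mul_inv_cancel₀ (pow_ne_zero _ hv)
    have hrq : r ^ 2 ^ m = r := by
      have hx02 : (-x0 ^ 2 : F) ≠ 0 := by simpa using pow_ne_zero 2 hx0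
      have hrz : r * (z1 - z3) = z1 - z2 := by
        rw [hr, mul_assoc, inv_mul_cancel₀ hv, mul_one]
      have hq1 : r ^ 2 ^ m * (z1 - z3) ^ 2 ^ m = (z1 - z2) ^ 2 ^ m := by
        rw [← mul_pow, hrz]
      rw [Rw, Rv] at hq1
      have hq2 : -x0 ^ 2 * (r ^ 2 ^ m * (z1 - z3)) = -x0 ^ 2 * (z1 - z2) := by
        linear_combination hq1
      have hq3 : r ^ 2 ^ m * (z1 - z3) = z1 - z2 := mul_left_cancel₀ hx02 hq2
      exact mul_right_cancel₀ hv (by rw [hq3, hrz])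
    have hrq1 : r ^ (2 ^ m - 1) = 1 :=
      mul_right_cancel₀ hr0 (show r ^ (2 ^ m - 1) * r = 1 * r by
        rw [← pow_succ, Nat.sub_add_cancel hqpos, hrq, one_mul])
    have hd3 : orderOf r ∣ 3 := orderOf_dvd_of_pow_eq_one hr3
    have hdq : orderOf r ∣ 2 ^ m - 1 := orderOf_dvd_of_pow_eq_one hrq1
    have hdvd1 : orderOf r ∣ 1 := (gcd3 m hodd) ▸ Nat.dvd_gcd hd3 hdq
    have hr1 : r = 1 := orderOf_eq_one_iff.mp (Nat.dvd_one.mp hdvd1)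
    have hweq : z1 - z2 = z1 - z3 := (mul_inv_eq_one₀ hv).mp (hr ▸ hr1)
    have hz23 : z2 = z3 := sub_right_inj.mp hweq
    rw [hz2, hz3] at hz23
    exact h23 (sub_left_inj.mp (inv_injective hz23))

theorem stmt11 (m : ℕ) (hm : 5 ≤ m) (hodd : Odd m)
    (B₁ B₂ : Finset (GaloisField 2 (2 * m)))
    (hB₁U : ↑B₁ ⊆ rootsSet (GaloisField 2 (2 * m)) (2 ^ m + 1))
    (hB₂U : ↑B₂ ⊆ rootsSet (GaloisField 2 (2 * m)) (2 ^ m + 1))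
    (hB₁ : B₁.card = 6) (hB₂ : B₂.card = 6)
    (h₁ : esym B₁ 3 = 0) (h₂ : esym B₂ 3 = 0) (hne : B₁ ≠ B₂) :
    (B₁ ∩ B₂).card ≤ 4 := by
  by_contra hcon
  push_neg at hcon
  have hsub1 : B₁ ∩ B₂ ⊆ B₁ := Finset.inter_subset_left
  have hsub2 : B₁ ∩ B₂ ⊆ B₂ := Finset.inter_subset_right
  have hle : (B₁ ∩ B₂).card ≤ 6 := hB₁ ▸ Finset.card_le_card hsub1
  have hcard5 : (B₁ ∩ B₂).card = 5 := by
    rcases Nat.lt_or_ge (B₁ ∩ B₂).card 6 with h | h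
    · omega
    · exfalso
      have e1 : B₁ ∩ B₂ = B₁ := Finset.eq_of_subset_of_card_le hsub1 (by omega)
      have e2 : B₁ ∩ B₂ = B₂ := Finset.eq_of_subset_of_card_le hsub2 (by omega)
      exact hne (e1.symm.trans e2)
  -- extract the extra elements p and r
  have hd1 : (B₁ \ (B₁ ∩ B₂)).Nonempty := by
    rw [← Finset.card_pos, Finset.card_sdiff_of_subset hsub1]; omega
  obtain ⟨p, hp⟩ := hd1
  rw [Finset.mem_sdiff] at hp
  have hB1S : B₁ = insert p (B₁ ∩ B₂) := by
    refine (Finset.eq_of_subset_of_card_le (Finset.insert_subset hp.1 hsub1) ?_).symm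
    rw [Finset.card_insert_of_notMem hp.2]; omega
  have hd2 : (B₂ \ (B₁ ∩ B₂)).Nonempty := by
    rw [← Finset.card_pos, Finset.card_sdiff_of_subset hsub2]; omega
  obtain ⟨r, hr⟩ := hd2
  rw [Finset.mem_sdiff] at hr
  have hB2S : B₂ = insert r (B₁ ∩ B₂) := by
    refine (Finset.eq_of_subset_of_card_le (Finset.insert_subset hr.1 hsub2) ?_).symm
    rw [Finset.card_insert_of_notMem hr.2]; omega
  have hpr : p ≠ r := by
    intro h
    exact hne (hB1S.trans (by rw [h, ← hB2S]))
  have h₁' : esym (B₁ ∩ B₂) 3 + p * esym (B₁ ∩ B₂) 2 = 0 := by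
    rw [hB1S] at h₁
    rwa [show (3 : ℕ) = 2 + 1 from rfl, esym_insert hp.2] at h₁
  have h₂' : esym (B₁ ∩ B₂) 3 + r * esym (B₁ ∩ B₂) 2 = 0 := by
    rw [hB2S] at h₂
    rwa [show (3 : ℕ) = 2 + 1 from rfl, esym_insert hr.2] at h₂
  have hE2 : esym (B₁ ∩ B₂) 2 = 0 := by
    rcases mul_eq_zero.mp (show (p - r) * esym (B₁ ∩ B₂) 2 = 0 by
      linear_combination h₁' - h₂') with h | h
    · exact absurd h (sub_ne_zero.mpr hpr)
    · exact h
  have hE3 : esym (B₁ ∩ B₂) 3 = 0 := by linear_combination h₁' - p * hE2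
  -- decompose the 5-element intersection
  obtain ⟨x0, T0, hm0, hT0S, hc0⟩ := Finset.card_eq_succ.mp (show (B₁ ∩ B₂).card = 4 + 1 by omega)
  obtain ⟨x1, T1, hm1, hT1, hc1⟩ := Finset.card_eq_succ.mp (show T0.card = 3 + 1 by omega)
  obtain ⟨x2, T2, hm2, hT2, hc2⟩ := Finset.card_eq_succ.mp (show T1.card = 2 + 1 by omega)
  obtain ⟨x3, T3, hm3, hT3, hc3⟩ := Finset.card_eq_succ.mp (show T2.card = 1 + 1 by omega)
  obtain ⟨x4, hT4⟩ := Finset.card_eq_one.mp (show T3.card = 1 by omega)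
  subst hT4
  subst hT3
  subst hT2
  subst hT1
  have hSx : B₁ ∩ B₂ = insert x0 (insert x1 (insert x2 (insert x3 (insert x4 ∅)))) := by
    rw [← hT0S]; rfl
  -- distinctness
  simp only [Finset.mem_insert, Finset.mem_singleton, not_or] at hm0 hm1 hm2 hm3
  obtain ⟨d01, d02, d03, d04⟩ := hm0
  obtain ⟨d12, d13, d14⟩ := hm1
  obtain ⟨d23, d24⟩ := hm2
  have d34 : x3 ≠ x4 := by simpa using hm3
  -- memberships in U
  have hmemS : ∀ x ∈ (B₁ ∩ B₂), x ^ (2 ^ m + 1) = 1 := by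
    intro x hx
    have := hB₁U (Finset.mem_coe.mpr (hsub1 hx))
    rwa [rootsSet, Set.mem_setOf_eq] at this
  have hx0S : x0 ∈ B₁ ∩ B₂ := by rw [hSx]; simp
  have hx1S : x1 ∈ B₁ ∩ B₂ := by rw [hSx]; simp
  have hx2S : x2 ∈ B₁ ∩ B₂ := by rw [hSx]; simp
  have hx3S : x3 ∈ B₁ ∩ B₂ := by rw [hSx]; simp
  -- esym computations
  have hins : ∀ (y : GaloisField 2 (2 * m)) (t : Finset (GaloisField 2 (2 * m))), y ∉ t →
      esym (insert y t) 1 = esym t 1 + y ∧ esym (insert y t) 2 = esym t 2 + y * esym t 1 ∧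
      esym (insert y t) 3 = esym t 3 + y * esym t 2 := by
    intro y t hy
    refine ⟨?_, esym_insert hy 1, esym_insert hy 2⟩
    have h := esym_insert hy 0
    rw [esym_zero] at h
    simpa using h
  have m4 : x4 ∉ (∅ : Finset (GaloisField 2 (2 * m))) := Finset.notMem_empty x4
  have m3 : x3 ∉ insert x4 (∅ : Finset (GaloisField 2 (2 * m))) := by simpa using d34
  have m2 : x2 ∉ insert x3 (insert x4 (∅ : Finset (GaloisField 2 (2 * m)))) := by
    simp [d23, d24]
  have m1 : x1 ∉ insert x2 (insert x3 (insert x4 (∅ : Finset (GaloisField 2 (2 * m))))) := by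
    simp [d12, d13, d14]
  have m0 : x0 ∉ insert x1 (insert x2 (insert x3 (insert x4 (∅ : Finset (GaloisField 2 (2 * m)))))) := by
    simp [d01, d02, d03, d04]
  obtain ⟨p41, p42, p43⟩ := hins x4 ∅ m4
  obtain ⟨p31, p32, p33⟩ := hins x3 _ m3
  obtain ⟨p21, p22, p23⟩ := hins x2 _ m2
  obtain ⟨p11, p12, p13⟩ := hins x1 _ m1
  obtain ⟨p01, p02, p03⟩ := hins x0 _ m0
  have he1 : esym (∅ : Finset (GaloisField 2 (2 * m))) 1 = 0 := esym_empty 0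
  have he2 : esym (∅ : Finset (GaloisField 2 (2 * m))) 2 = 0 := esym_empty 1
  have he3 : esym (∅ : Finset (GaloisField 2 (2 * m))) 3 = 0 := esym_empty 2
  rw [hSx] at hE2 hE3
  simp only [p01, p02, p03, p11, p12, p13, p21, p22, p23, p31, p32, p33, p41, p42, p43,
    he1, he2, he3] at hE2 hE3
  -- the five elements are roots of X^5 - aE X^4 + AE X - eE
  set aE := x0 + x1 + x2 + x3 + x4 with haE
  set AE := x0*x1*x2*x3 + x0*x1*x2*x4 + x0*x1*x3*x4 + x0*x2*x3*x4 + x1*x2*x3*x4 with hAE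
  set eE := x0*x1*x2*x3*x4 with heE
  have Hx0 : x0 ^ 5 - aE * x0 ^ 4 + AE * x0 - eE = 0 := by
    rw [haE, hAE, heE]; linear_combination (-(x0 ^ 3)) * hE2 + (x0 ^ 2) * hE3
  have Hx1 : x1 ^ 5 - aE * x1 ^ 4 + AE * x1 - eE = 0 := by
    rw [haE, hAE, heE]; linear_combination (-(x1 ^ 3)) * hE2 + (x1 ^ 2) * hE3
  have Hx2 : x2 ^ 5 - aE * x2 ^ 4 + AE * x2 - eE = 0 := by
    rw [haE, hAE, heE]; linear_combination (-(x2 ^ 3)) * hE2 + (x2 ^ 2) * hE3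
  have Hx3 : x3 ^ 5 - aE * x3 ^ 4 + AE * x3 - eE = 0 := by
    rw [haE, hAE, heE]; linear_combination (-(x3 ^ 3)) * hE2 + (x3 ^ 2) * hE3
  exact core m hodd x0 x1 x2 x3 aE AE eE d01 d02 d03 d12 d13 d23
    (hmemS x0 hx0S) (hmemS x1 hx1S) (hmemS x2 hx2S) (hmemS x3 hx3S) Hx0 Hx1 Hx2 Hx3
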